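/- Let d be a strictly positive probability distribution on {1,...,n} with n ≥ 4 and non-increasing components with d_n < d_{n-1}, and let M₀ be the (n-1)×(n-1) doubly stochastic matrix with (M₀)_{i,j} = 1/(n-2) for i ≠ j and 0 on the diagonal. Define M = M₀ ⊕ 1 (acting as the identity on the last coordinate). If M = Π_{k=1}^{N} T^d_{λ_k}(i_k, j_k) is a product of T^d-transforms, then every factor with j_k = n and λ_k > 0 leads to a contradiction; i.e., any such product decomposition uses only T^d-transforms on the first n-1 coordinates. Consequently M is in the WETO polytope of d if and only if M₀ is a product of T-transforms for the uniform distribution on n-1 points. -/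

import Mathlib

open Matrix BigOperators

/-- The `d`-swap `P^d(i,j)`: the identity except on the pair `{i,j}`, where it has
entries `(i,i) = 1 - d j / d i`, `(i,j) = 1`, `(j,i) = d j / d i`, `(j,j) = 0`. -/
noncomputable def Pswap {n : ℕ} (d : Fin n → ℝ) (i j : Fin n) : Matrix (Fin n) (Fin n) ℝ :=
  Matrix.of fun k l =>
    if k = i ∧ l = i then 1 - d j / d i
    else if k = i ∧ l = j then 1
    else if k = j ∧ l = i then d j / d i
    else if k = j ∧ l = j then 0
    else if k = l then 1 else 0

/-- The `T^d`-transform `T^d_λ(i,j) = (1-λ)·I + λ·P^d(i,j)`. -/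
noncomputable def Td {n : ℕ} (d : Fin n → ℝ) (lam : ℝ) (i j : Fin n) :
    Matrix (Fin n) (Fin n) ℝ :=
  (1 - lam) • (1 : Matrix (Fin n) (Fin n) ℝ) + lam • Pswap d i j

section aux
variable {n : ℕ} (d : Fin n → ℝ) (lam : ℝ) (i j : Fin n)

lemma Td_apply (k l : Fin n) :
    Td d lam i j k l = (1 - lam) * (if k = l then 1 else 0) + lam * Pswap d i j k l := by
  simp [Td, Matrix.one_apply]

lemma Td_zero : Td d 0 i j = 1 := by
  simp [Td]

lemma Td_row (hij : i ≠ j) (k x : Fin n) : Td d lam i j k x =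
    if k = i then ((1 - lam * (d j / d i)) * (if x = i then 1 else 0) + lam * (if x = j then 1 else 0))
    else if k = j then ((lam * (d j / d i)) * (if x = i then 1 else 0) + (1 - lam) * (if x = j then 1 else 0))
    else (if k = x then 1 else 0) := by
  have hji : j ≠ i := hij.symm
  rw [Td_apply]
  simp only [Pswap, Matrix.of_apply]
  by_cases hki : k = i
  · simp only [hki, if_pos rfl, true_and, hij, false_and, if_false]
    split_ifs <;> solve | ring | (subst_vars; tauto) | (subst_vars; simp_all) | (subst_vars; simp_all; ring) | (subst_vars; ring)
  · by_cases hkj : k = j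
    · simp only [hki, hkj, if_neg hki, if_pos rfl, true_and, false_and, if_false, hji]
      split_ifs <;> solve | ring | (subst_vars; tauto) | (subst_vars; simp_all) | (subst_vars; simp_all; ring) | (subst_vars; ring)
    · simp only [hki, hkj, if_neg hki, if_neg hkj, false_and, if_false]
      split_ifs <;> ring

lemma Td_mul_apply (hij : i ≠ j) (B : Matrix (Fin n) (Fin n) ℝ) (k l : Fin n) :
    (Td d lam i j * B) k l =
      if k = i then (1 - lam * (d j / d i)) * B i l + lam * B j l
      else if k = j then (lam * (d j / d i)) * B i l + (1 - lam) * B j l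
      else B k l := by
  rw [Matrix.mul_apply]
  by_cases hki : k = i
  · rw [if_pos hki]
    have key : ∀ x, Td d lam i j k x * B x l =
        (if x = i then (1 - lam * (d j / d i)) * B i l else 0) +
        (if x = j then lam * B j l else 0) := by
      intro x
      rw [Td_row d lam i j hij, if_pos hki]
      by_cases hxi : x = i
      · subst hxi; simp [hij, Ne.symm hij]
      · by_cases hxj : x = j
        · subst hxj; simp [hxi]
        · simp [hxi, hxj]
    simp only [key, Finset.sum_add_distrib, Finset.sum_ite_eq', Finset.mem_univ, if_true]
  · rw [if_neg hki]
    by_cases hkj : k = j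
    · rw [if_pos hkj]
      have key : ∀ x, Td d lam i j k x * B x l =
          (if x = i then (lam * (d j / d i)) * B i l else 0) +
          (if x = j then (1 - lam) * B j l else 0) := by
        intro x
        rw [Td_row d lam i j hij, if_neg hki, if_pos hkj]
        by_cases hxi : x = i
        · subst hxi; simp [hij, Ne.symm hij]
        · by_cases hxj : x = j
          · subst hxj; simp [hxi]
          · simp [hxi, hxj]
      simp only [key, Finset.sum_add_distrib, Finset.sum_ite_eq', Finset.mem_univ, if_true]
    · rw [if_neg hkj]
      have key : ∀ x, Td d lam i j k x * B x l = (if x = k then B k l else 0) := by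
        intro x
        rw [Td_row d lam i j hij, if_neg hki, if_neg hkj]
        by_cases hxk : x = k
        · subst hxk; simp
        · simp [hxk, Ne.symm hxk]
      simp only [key, Finset.sum_ite_eq', Finset.mem_univ, if_true]

lemma Pswap_colsum (hij : i ≠ j) (l : Fin n) : ∑ k, Pswap d i j k l = 1 := by
  by_cases hli : l = i
  · have key : ∀ k, Pswap d i j k l =
        (if k = i then 1 - d j / d i else 0) + (if k = j then d j / d i else 0) := by
      intro k
      simp only [Pswap, Matrix.of_apply]
      split_ifs <;> solve | ring | (subst_vars; tauto) | (subst_vars; simp_all) | (subst_vars; simp_all; ring)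
    simp only [key, Finset.sum_add_distrib, Finset.sum_ite_eq', Finset.mem_univ, if_true]
    ring
  · by_cases hlj : l = j
    · have key : ∀ k, Pswap d i j k l = (if k = i then 1 else 0) := by
        intro k
        simp only [Pswap, Matrix.of_apply]
        split_ifs <;> solve | ring | (subst_vars; tauto) | (subst_vars; simp_all) | (subst_vars; simp_all; ring)
      simp only [key, Finset.sum_ite_eq', Finset.mem_univ, if_true]
    · have key : ∀ k, Pswap d i j k l = (if k = l then 1 else 0) := by
        intro k
        simp only [Pswap, Matrix.of_apply]
        split_ifs <;> solve | ring | (subst_vars; tauto) | (subst_vars; simp_all) | (subst_vars; simp_all; ring)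
      simp only [key, Finset.sum_ite_eq', Finset.mem_univ, if_true]

lemma Td_colsum (hij : i ≠ j) (l : Fin n) : ∑ k, Td d lam i j k l = 1 := by
  simp only [Td_apply]
  rw [Finset.sum_add_distrib, ← Finset.mul_sum, ← Finset.mul_sum,
    Pswap_colsum d i j hij l]
  have h2 : ∑ k : Fin n, (if k = l then (1:ℝ) else 0) = 1 := by
    simp [Finset.sum_ite_eq']
  rw [h2]
  ring


lemma Td_nonneg (hij : i ≠ j) (h0 : 0 ≤ lam) (h1 : lam ≤ 1)
    (hr0 : 0 ≤ d j / d i) (hr1 : d j / d i ≤ 1) (k l : Fin n) :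
    0 ≤ Td d lam i j k l := by
  rw [Td_row d lam i j hij]
  split_ifs <;> nlinarith

lemma Td_mulVec (hij : i ≠ j) (hdi : d i ≠ 0) : Td d lam i j *ᵥ d = d := by
  funext k
  rw [Matrix.mulVec, dotProduct]
  by_cases hki : k = i
  · have key : ∀ x, Td d lam i j k x * d x =
        (if x = i then (1 - lam * (d j / d i)) * d i else 0) +
        (if x = j then lam * d j else 0) := by
      intro x
      rw [Td_row d lam i j hij, if_pos hki]
      by_cases hxi : x = i
      · subst hxi; simp [hij, Ne.symm hij]
      · by_cases hxj : x = j
        · subst hxj; simp [hxi]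
        · simp [hxi, hxj]
    simp only [key, Finset.sum_add_distrib, Finset.sum_ite_eq', Finset.mem_univ, if_true]
    subst hki
    field_simp
    try ring
  · by_cases hkj : k = j
    · have key : ∀ x, Td d lam i j k x * d x =
          (if x = i then (lam * (d j / d i)) * d i else 0) +
          (if x = j then (1 - lam) * d j else 0) := by
        intro x
        rw [Td_row d lam i j hij, if_neg hki, if_pos hkj]
        by_cases hxi : x = i
        · subst hxi; simp [hij, Ne.symm hij]
        · by_cases hxj : x = j
          · subst hxj; simp [hxi]
          · simp [hxi, hxj]
      simp only [key, Finset.sum_add_distrib, Finset.sum_ite_eq', Finset.mem_univ, if_true]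
      subst hkj
      field_simp
      try ring
    · have key : ∀ x, Td d lam i j k x * d x = (if x = k then d k else 0) := by
        intro x
        rw [Td_row d lam i j hij, if_neg hki, if_neg hkj]
        by_cases hxk : x = k
        · subst hxk; simp
        · simp [hxk, Ne.symm hxk]
      simp only [key, Finset.sum_ite_eq', Finset.mem_univ, if_true]

lemma list_prod_nonneg (L : List (Matrix (Fin n) (Fin n) ℝ))
    (h : ∀ A ∈ L, ∀ k l, 0 ≤ A k l) : ∀ k l, 0 ≤ L.prod k l := by
  induction L with
  | nil => intro k l; simp [Matrix.one_apply]; split_ifs <;> norm_num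
  | cons A L ih =>
    intro k l
    rw [List.prod_cons, Matrix.mul_apply]
    refine Finset.sum_nonneg fun m _ => mul_nonneg ?_ ?_
    · exact h A (List.mem_cons_self) k m
    · exact ih (fun B hB => h B (List.mem_cons_of_mem _ hB)) m l

lemma list_prod_colsum (L : List (Matrix (Fin n) (Fin n) ℝ))
    (h : ∀ A ∈ L, ∀ l, ∑ k, A k l = 1) : ∀ l, ∑ k, L.prod k l = 1 := by
  induction L with
  | nil => intro l; simp [Matrix.one_apply, Finset.sum_ite_eq']
  | cons A L ih =>
    intro l
    rw [List.prod_cons]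
    simp only [Matrix.mul_apply]
    rw [Finset.sum_comm]
    have : ∀ m : Fin n, ∑ k : Fin n, A k m * L.prod m l = L.prod m l := by
      intro m
      rw [← Finset.sum_mul, h A (List.mem_cons_self) m, one_mul]
    rw [Finset.sum_congr rfl fun m _ => this m]
    exact ih (fun B hB => h B (List.mem_cons_of_mem _ hB)) l

lemma list_prod_mulVec (L : List (Matrix (Fin n) (Fin n) ℝ)) (v : Fin n → ℝ)
    (h : ∀ A ∈ L, A *ᵥ v = v) : L.prod *ᵥ v = v := by
  induction L with
  | nil => simp
  | cons A L ih =>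
    rw [List.prod_cons, ← Matrix.mulVec_mulVec,
      ih (fun B hB => h B (List.mem_cons_of_mem _ hB)), h A (List.mem_cons_self)]

end aux

noncomputable def Mblock (n : ℕ) : Matrix (Fin n) (Fin n) ℝ :=
  Matrix.of fun i j =>
    if i.val = n - 1 ∧ j.val = n - 1 then 1
    else if i.val = n - 1 ∨ j.val = n - 1 then 0
    else if i = j then 0 else 1 / ((n : ℝ) - 2)

lemma Mblock_colsum (n : ℕ) (hn : 4 ≤ n) (l : Fin n) : ∑ k, Mblock n k l = 1 := by
  have hcast : (4:ℝ) ≤ (n:ℝ) := by exact_mod_cast hn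
  by_cases hl : l.val = n - 1
  · have key : ∀ k : Fin n, Mblock n k l = if k = (⟨n-1, by omega⟩ : Fin n) then 1 else 0 := by
      intro k
      by_cases hk : k.val = n - 1
      · have : k = (⟨n-1, by omega⟩ : Fin n) := by simp [Fin.ext_iff, hk]
        simp [Mblock, hk, hl, this]
      · have : k ≠ (⟨n-1, by omega⟩ : Fin n) := by simp [Fin.ext_iff, hk]
        simp [Mblock, hk, hl, this]
    simp only [key, Finset.sum_ite_eq', Finset.mem_univ, if_true]
  · set c : ℝ := 1 / ((n:ℝ) - 2) with hc
    set nn : Fin n := ⟨n-1, by omega⟩ with hnn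
    have hlnn : l ≠ nn := by simp [Fin.ext_iff, hnn, hl]
    have hnnl : nn ≠ l := Ne.symm hlnn
    have hne2 : (n:ℝ) - 2 ≠ 0 := by linarith
    have key : ∀ k : Fin n, Mblock n k l =
        c - (if k = l then c else 0) - (if k = nn then c else 0) := by
      intro k
      by_cases hkl : k = l
      · subst hkl
        have hk : k.val ≠ n - 1 := hl
        simp [Mblock, hk, hl, Ne.symm, hlnn]
      · by_cases hknn : k = nn
        · have hk : k.val = n - 1 := by rw [hknn]
          simp [Mblock, hk, hl, hkl, hknn, hnnl]
          exact fun h => absurd rfl h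
        · have hk : k.val ≠ n - 1 := by simp [Fin.ext_iff, hnn] at hknn ⊢; exact hknn
          simp [Mblock, hk, hl, hkl, hknn, hnnl, hc, one_div]
    simp only [key]
    rw [Finset.sum_sub_distrib, Finset.sum_sub_distrib, Finset.sum_const,
      Finset.sum_ite_eq', Finset.sum_ite_eq']
    simp only [Finset.mem_univ, if_true, Finset.card_univ, Fintype.card_fin, nsmul_eq_mul]
    rw [hc]
    field_simp
    ring

lemma mblock_master (n : ℕ) (hn : 4 ≤ n) (d : Fin n → ℝ) (hpos : ∀ i, 0 < d i)
    (hmono : ∀ i j : Fin n, i ≤ j → d j ≤ d i)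
    (hlast : d ⟨n - 1, Nat.sub_lt (by omega) one_pos⟩ < d ⟨n - 2, Nat.sub_lt (by omega) two_pos⟩) :
    ∀ L : List (ℝ × Fin n × Fin n),
      (∀ t ∈ L, t.2.1 < t.2.2 ∧ t.1 ∈ Set.Icc (0 : ℝ) 1) →
      ∀ σ : Equiv.Perm (Fin n), σ ⟨n - 1, Nat.sub_lt (by omega) one_pos⟩ = ⟨n - 1, Nat.sub_lt (by omega) one_pos⟩ →
      (Matrix.of fun k l => Mblock n (σ k) l) ≠ (L.map fun t => Td d t.1 t.2.1 t.2.2).prod := by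
  have hcast : (4:ℝ) ≤ (n:ℝ) := by exact_mod_cast hn
  have hcpos : 0 < 1 / ((n:ℝ) - 2) := by
    have : (0:ℝ) < (n:ℝ) - 2 := by linarith
    positivity
  have hclt : 1 / ((n:ℝ) - 2) < 1 := by
    rw [div_lt_one (by linarith)]; linarith
  intro L
  induction L with
  | nil =>
    intro _ σ hσ hEq
    set nn : Fin n := ⟨n-1, by omega⟩ with hnn
    set z : Fin n := ⟨0, by omega⟩ with hz
    simp only [List.map_nil, List.prod_nil] at hEq
    have h0 := congrFun (congrFun hEq (σ.symm z)) (σ.symm z)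
    simp only [Matrix.of_apply, Equiv.apply_symm_apply, Matrix.one_apply_eq] at h0
    have hwnn : σ.symm z ≠ nn := by
      intro h
      have : z = σ nn := by rw [← h, Equiv.apply_symm_apply]
      rw [hσ] at this
      have : (0:ℕ) = n - 1 := congrArg Fin.val this
      omega
    have hzv : (z).val ≠ n - 1 := by simp [hz]; omega
    have hwv : (σ.symm z).val ≠ n - 1 := by
      intro h
      exact hwnn (by simp [Fin.ext_iff, hnn, h])
    rw [Mblock] at h0
    simp only [Matrix.of_apply, hzv, hwv, false_and, if_false, false_or, or_false] at h0
    split_ifs at h0 <;> linarith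
  | cons t L ih =>
    intro hL σ hσ hEq
    obtain ⟨lam, i, j⟩ := t
    obtain ⟨hij, hlam⟩ := hL (lam, i, j) (List.mem_cons_self)
    obtain ⟨hlam0, hlam1⟩ := hlam
    simp only at hij hlam0 hlam1
    have hL' : ∀ t ∈ L, t.2.1 < t.2.2 ∧ t.1 ∈ Set.Icc (0:ℝ) 1 :=
      fun t ht => hL t (List.mem_cons_of_mem _ ht)
    set nn : Fin n := ⟨n-1, by omega⟩ with hnn
    set B := (L.map fun t => Td d t.1 t.2.1 t.2.2).prod with hB
    simp only [List.map_cons, List.prod_cons] at hEq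
    rw [← hB] at hEq
    have hijne : i ≠ j := ne_of_lt hij
    have Bnn : ∀ k l, 0 ≤ B k l := by
      apply list_prod_nonneg
      intro A hA
      rw [List.mem_map] at hA
      obtain ⟨t, ht, rfl⟩ := hA
      obtain ⟨ht1, ht2, ht3⟩ := hL' t ht
      exact Td_nonneg d t.1 t.2.1 t.2.2 (ne_of_lt ht1) ht2 ht3
        (div_nonneg (hpos _).le (hpos _).le)
        ((div_le_one (hpos _)).mpr (hmono _ _ ht1.le))
    have Bcol : ∀ l, ∑ k, B k l = 1 := by
      apply list_prod_colsum
      intro A hA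
      rw [List.mem_map] at hA
      obtain ⟨t, ht, rfl⟩ := hA
      exact Td_colsum d t.1 t.2.1 t.2.2 (ne_of_lt (hL' t ht).1)
    have Bfix : B *ᵥ d = d := by
      apply list_prod_mulVec
      intro A hA
      rw [List.mem_map] at hA
      obtain ⟨t, ht, rfl⟩ := hA
      exact Td_mulVec d t.1 t.2.1 t.2.2 (ne_of_lt (hL' t ht).1) (hpos _).ne'
    have hivv : i.val < n - 1 := by
      have h1 : i.val < j.val := hij
      have h2 : j.val < n := j.isLt
      omega
    have hiv : i ≠ nn := by simp [Fin.ext_iff, hnn]; omega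
    have hr0 : 0 < d j / d i := div_pos (hpos j) (hpos i)
    have hr1 : d j / d i ≤ 1 := (div_le_one (hpos i)).mpr (hmono i j hij.le)
    rcases eq_or_lt_of_le hlam0 with hl0 | hl0
    · exact ih hL' σ hσ (by rw [hEq, ← hl0, Td_zero, one_mul])
    · by_cases hjn : j = nn
      · -- factor acting on the last level: impossible
        have hrlt : d j / d i < 1 := by
          rw [div_lt_one (hpos i), hjn]
          exact lt_of_lt_of_le hlast (hmono i ⟨n - 2, by omega⟩ (by simp [Fin.le_def]; omega))
        have hlr : lam * (d j / d i) < 1 := by nlinarith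
        have hlrpos : 0 < lam * (d j / d i) := mul_pos hl0 hr0
        have hσinn : σ i ≠ nn := fun h => hiv (σ.injective (h.trans hσ.symm))
        have hσiv : (σ i).val ≠ n - 1 := by
          intro h; exact hσinn (by simp [Fin.ext_iff, hnn, h])
        have hBi : ∀ l, B i l = 0 := by
          intro l
          by_cases hl : l = nn
          · have e := congrFun (congrFun hEq i) l
            rw [Td_mul_apply d lam i j hijne, if_pos rfl] at e
            have hM : Mblock n (σ i) l = 0 := by
              have hlv : l.val = n - 1 := by rw [hl]
              simp [Mblock, hσiv, hlv]
            simp only [Matrix.of_apply] at e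
            rw [hM] at e
            have t1 : 0 ≤ (1 - lam * (d j / d i)) * B i l :=
              mul_nonneg (by linarith) (Bnn _ _)
            have t2 : 0 ≤ lam * B j l := mul_nonneg hl0.le (Bnn _ _)
            have h3 : (1 - lam * (d j / d i)) * B i l = 0 := by linarith
            rcases mul_eq_zero.mp h3 with h | h
            · linarith
            · exact h
          · have e := congrFun (congrFun hEq nn) l
            have hnni : nn ≠ i := Ne.symm hiv
            have hnnj : nn = j := hjn.symm
            rw [Td_mul_apply d lam i j hijne, if_neg hnni, if_pos hnnj] at e
            have hM : Mblock n (σ nn) l = 0 := by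
              rw [hσ]
              have hlv : l.val ≠ n - 1 := by
                intro h; exact hl (by simp [Fin.ext_iff, hnn, h])
              have : (nn : Fin n).val = n - 1 := rfl
              simp [Mblock, hlv, this]
            simp only [Matrix.of_apply] at e
            rw [hM] at e
            have t1 : 0 ≤ lam * (d j / d i) * B i l := mul_nonneg hlrpos.le (Bnn _ _)
            have t2 : 0 ≤ (1 - lam) * B j l := mul_nonneg (by linarith) (Bnn _ _)
            have h3 : lam * (d j / d i) * B i l = 0 := by linarith
            rcases mul_eq_zero.mp h3 with h | h
            · exact absurd h hlrpos.ne'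
            · exact h
        have := congrFun Bfix i
        rw [Matrix.mulVec, dotProduct] at this
        simp only [hBi, zero_mul, Finset.sum_const_zero] at this
        exact absurd this.symm (hpos i).ne'
      · by_cases hsw : lam = 1 ∧ d j = d i
        · -- swap case
          have hdine : d i ≠ 0 := (hpos i).ne'
          have hr : d j / d i = 1 := by rw [hsw.2]; field_simp
          have hjvv : j.val < n - 1 := by
            have := j.isLt
            have : j.val ≠ n - 1 := by
              intro h; exact hjn (by simp [Fin.ext_iff, hnn, h])
            omega
          have hswnn : (Equiv.swap i j) nn = nn := by
            apply Equiv.swap_apply_of_ne_of_ne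
            · exact Ne.symm hiv
            · intro h; exact hjn h.symm
          have htr : ((Equiv.swap i j).trans σ) nn = nn := by
            simp only [Equiv.trans_apply]; rw [hswnn, hσ]
          apply ih hL' ((Equiv.swap i j).trans σ) htr
          have hA : ∀ k l, Mblock n (σ k) l = (Td d lam i j * B) k l := by
            intro k l
            have := congrFun (congrFun hEq k) l
            simpa using this
          ext k l
          simp only [Matrix.of_apply, Equiv.trans_apply]
          by_cases hki : k = i
          · rw [hki, Equiv.swap_apply_left]
            rw [hA j l, Td_mul_apply d lam i j hijne, if_neg (Ne.symm hijne), if_pos rfl,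
              hsw.1, hr]
            ring
          · by_cases hkj : k = j
            · rw [hkj, Equiv.swap_apply_right]
              rw [hA i l, Td_mul_apply d lam i j hijne, if_pos rfl, hsw.1, hr]
              ring
            · rw [Equiv.swap_apply_of_ne_of_ne hki hkj]
              rw [hA k l, Td_mul_apply d lam i j hijne, if_neg hki, if_neg hkj]
        · -- main contradiction case
          exfalso
          have hlr : lam * (d j / d i) < 1 := by
            rcases eq_or_lt_of_le hlam1 with h1 | h1
            · have hdj : d j ≠ d i := fun h => hsw ⟨h1, h⟩
              have hlt : d j < d i := lt_of_le_of_ne (hmono i j hij.le) hdj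
              have : d j / d i < 1 := by rw [div_lt_one (hpos i)]; exact hlt
              nlinarith
            · nlinarith
          have hσinn : σ i ≠ nn := fun h => hiv (σ.injective (h.trans hσ.symm))
          have hσiv : (σ i).val ≠ n - 1 := by
            intro h; exact hσinn (by simp [Fin.ext_iff, hnn, h])
          have hσjnn : σ j ≠ nn := fun h => hjn (σ.injective (h.trans hσ.symm))
          have hσjv : (σ j).val ≠ n - 1 := by
            intro h; exact hσjnn (by simp [Fin.ext_iff, hnn, h])
          have hσji : σ j ≠ σ i := fun h => hijne (σ.injective h).symm
          have e := congrFun (congrFun hEq i) (σ i)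
          rw [Td_mul_apply d lam i j hijne, if_pos rfl] at e
          simp only [Matrix.of_apply] at e
          have hMii : Mblock n (σ i) (σ i) = 0 := by simp [Mblock, hσiv]
          rw [hMii] at e
          have t1 : 0 ≤ (1 - lam * (d j / d i)) * B i (σ i) :=
            mul_nonneg (by linarith) (Bnn _ _)
          have t2 : 0 ≤ lam * B j (σ i) := mul_nonneg hl0.le (Bnn _ _)
          have hBi : B i (σ i) = 0 := by
            have h3 : (1 - lam * (d j / d i)) * B i (σ i) = 0 := by linarith
            rcases mul_eq_zero.mp h3 with h | h
            · linarith
            · exact h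
          have hBj : B j (σ i) = 0 := by
            have h3 : lam * B j (σ i) = 0 := by linarith
            rcases mul_eq_zero.mp h3 with h | h
            · linarith
            · exact h
          have hsum1 : ∑ k, B k (σ i) = 1 := Bcol (σ i)
          have hsum2 : ∑ k, Mblock n (σ k) (σ i) = 1 := by
            rw [Equiv.sum_comp σ (fun a => Mblock n a (σ i))]
            exact Mblock_colsum n hn (σ i)
          have hfj : Mblock n (σ j) (σ i) = 1 / ((n:ℝ) - 2) := by
            simp [Mblock, hσjv, hσiv, hσji]
          have hagree : ∀ k, k ≠ i → k ≠ j → B k (σ i) = Mblock n (σ k) (σ i) := by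
            intro k hk1 hk2
            have e2 := congrFun (congrFun hEq k) (σ i)
            rw [Td_mul_apply d lam i j hijne, if_neg hk1, if_neg hk2] at e2
            simp only [Matrix.of_apply] at e2
            exact e2.symm
          have hmemi : i ∈ (Finset.univ : Finset (Fin n)) := Finset.mem_univ i
          have hmemj : j ∈ Finset.univ.erase i :=
            Finset.mem_erase.mpr ⟨Ne.symm hijne, Finset.mem_univ j⟩
          have eB1 : ∑ k ∈ (Finset.univ.erase i).erase j, B k (σ i) + B j (σ i)
              = ∑ k ∈ Finset.univ.erase i, B k (σ i) := Finset.sum_erase_add _ _ hmemj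
          have eB2 : ∑ k ∈ Finset.univ.erase i, B k (σ i) + B i (σ i)
              = ∑ k ∈ Finset.univ, B k (σ i) := Finset.sum_erase_add _ _ hmemi
          have eM1 : ∑ k ∈ (Finset.univ.erase i).erase j, Mblock n (σ k) (σ i) + Mblock n (σ j) (σ i)
              = ∑ k ∈ Finset.univ.erase i, Mblock n (σ k) (σ i) := Finset.sum_erase_add _ _ hmemj
          have eM2 : ∑ k ∈ Finset.univ.erase i, Mblock n (σ k) (σ i) + Mblock n (σ i) (σ i)
              = ∑ k ∈ Finset.univ, Mblock n (σ k) (σ i) := Finset.sum_erase_add _ _ hmemi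
          have hagree2 : ∑ k ∈ (Finset.univ.erase i).erase j, B k (σ i)
              = ∑ k ∈ (Finset.univ.erase i).erase j, Mblock n (σ k) (σ i) := by
            refine Finset.sum_congr rfl fun k hk => ?_
            rw [Finset.mem_erase] at hk
            obtain ⟨hk2, hk1⟩ := hk
            rw [Finset.mem_erase] at hk1
            exact hagree k hk1.1 hk2
          rw [hBi] at eB2
          rw [hBj] at eB1
          rw [hMii] at eM2
          rw [hfj] at eM1
          rw [hsum1] at eB2
          rw [hsum2] at eM2
          linarith

lemma unif_master (m : ℕ) (hm : 3 ≤ m) (c : ℝ) (hc : 0 < c) (e : ℝ)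
    (he : ((m:ℝ) - 1) * e = 1) :
    ∀ L : List (ℝ × Fin m × Fin m),
      (∀ t ∈ L, t.2.1 < t.2.2 ∧ t.1 ∈ Set.Icc (0:ℝ) 1) →
      ∀ σ : Equiv.Perm (Fin m),
      (Matrix.of fun k l => if σ k = l then (0:ℝ) else e) ≠
        (L.map fun t => Td (fun _ => c) t.1 t.2.1 t.2.2).prod := by
  have hm3 : (3:ℝ) ≤ (m:ℝ) := by exact_mod_cast hm
  have hm1 : (2:ℝ) ≤ (m:ℝ) - 1 := by linarith
  have hepos : 0 < e := by nlinarith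
  have helt : e < 1 := by nlinarith
  set dd : Fin m → ℝ := fun _ => c with hdd
  have hmz : 0 < m := by omega
  intro L
  induction L with
  | nil =>
    intro _ σ hEq
    simp only [List.map_nil, List.prod_nil] at hEq
    have h0 := congrFun (congrFun hEq ⟨0, hmz⟩) ⟨0, hmz⟩
    simp only [Matrix.of_apply, Matrix.one_apply_eq] at h0
    split_ifs at h0 <;> linarith
  | cons t L ih =>
    intro hL σ hEq
    obtain ⟨lam, i, j⟩ := t
    obtain ⟨hij, hlam⟩ := hL _ (List.mem_cons_self)
    obtain ⟨hlam0, hlam1⟩ := hlam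
    simp only at hij hlam0 hlam1
    have hL' : ∀ t ∈ L, t.2.1 < t.2.2 ∧ t.1 ∈ Set.Icc (0:ℝ) 1 :=
      fun t ht => hL t (List.mem_cons_of_mem _ ht)
    set B := (L.map fun t => Td dd t.1 t.2.1 t.2.2).prod with hB
    simp only [List.map_cons, List.prod_cons] at hEq
    rw [← hB] at hEq
    have hijne : i ≠ j := ne_of_lt hij
    have hrr : ∀ a b : Fin m, dd a / dd b = 1 := fun a b => div_self hc.ne'
    have Bnn : ∀ k l, 0 ≤ B k l := by
      apply list_prod_nonneg
      intro A hA
      rw [List.mem_map] at hA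
      obtain ⟨t, ht, rfl⟩ := hA
      obtain ⟨ht1, ht2, ht3⟩ := hL' t ht
      exact Td_nonneg dd t.1 t.2.1 t.2.2 (ne_of_lt ht1) ht2 ht3
        (div_nonneg hc.le hc.le) (le_of_eq (hrr t.2.2 t.2.1))
    have Bcol : ∀ l, ∑ k, B k l = 1 := by
      apply list_prod_colsum
      intro A hA
      rw [List.mem_map] at hA
      obtain ⟨t, ht, rfl⟩ := hA
      exact Td_colsum dd t.1 t.2.1 t.2.2 (ne_of_lt (hL' t ht).1)
    rcases eq_or_lt_of_le hlam0 with hl0 | hl0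
    · exact ih hL' σ (by rw [hEq, ← hl0, Td_zero, one_mul])
    · rcases eq_or_lt_of_le hlam1 with hl1 | hl1
      · -- lam = 1 : swap case
        apply ih hL' ((Equiv.swap i j).trans σ)
        have hA : ∀ k l, (if σ k = l then (0:ℝ) else e) = (Td dd lam i j * B) k l := by
          intro k l
          have := congrFun (congrFun hEq k) l
          simpa using this
        ext k l
        simp only [Matrix.of_apply, Equiv.trans_apply]
        by_cases hki : k = i
        · rw [hki]
          simp only [Equiv.swap_apply_left]
          rw [hA j l, Td_mul_apply dd lam i j hijne, if_neg (Ne.symm hijne), if_pos rfl,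
            hrr j i, hl1]
          ring
        · by_cases hkj : k = j
          · rw [hkj]
            simp only [Equiv.swap_apply_right]
            rw [hA i l, Td_mul_apply dd lam i j hijne, if_pos rfl, hrr j i, hl1]
            ring
          · simp only [Equiv.swap_apply_of_ne_of_ne hki hkj]
            rw [hA k l, Td_mul_apply dd lam i j hijne, if_neg hki, if_neg hkj]
      · -- 0 < lam < 1 : contradiction
        exfalso
        have e0 := congrFun (congrFun hEq i) (σ i)
        rw [Td_mul_apply dd lam i j hijne, if_pos rfl, hrr j i] at e0
        simp only [Matrix.of_apply, eq_self_iff_true, if_true, mul_one] at e0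
        have t1 : 0 ≤ (1 - lam) * B i (σ i) := mul_nonneg (by linarith) (Bnn _ _)
        have t2 : 0 ≤ lam * B j (σ i) := mul_nonneg hl0.le (Bnn _ _)
        have hBi : B i (σ i) = 0 := by
          have h3 : (1 - lam) * B i (σ i) = 0 := by linarith
          rcases mul_eq_zero.mp h3 with h | h
          · linarith
          · exact h
        have hBj : B j (σ i) = 0 := by
          have h3 : lam * B j (σ i) = 0 := by linarith
          rcases mul_eq_zero.mp h3 with h | h
          · linarith
          · exact h
        have hsum1 : ∑ k, B k (σ i) = 1 := Bcol (σ i)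
        have key : ∀ k, (if σ k = σ i then (0:ℝ) else e) = e - (if k = i then e else 0) := by
          intro k
          by_cases hk : k = i
          · simp [hk]
          · have : σ k ≠ σ i := fun h => hk (σ.injective h)
            simp [hk, this]
        have hsum2 : ∑ k, (if σ k = σ i then (0:ℝ) else e) = 1 := by
          simp only [key]
          rw [Finset.sum_sub_distrib, Finset.sum_const, Finset.sum_ite_eq']
          simp only [Finset.mem_univ, if_true, Finset.card_univ, Fintype.card_fin,
            nsmul_eq_mul]
          have : (m:ℝ) * e - e = ((m:ℝ) - 1) * e := by ring
          rw [this, he]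
        have hfj : (if σ j = σ i then (0:ℝ) else e) = e := by
          have : σ j ≠ σ i := fun h => hijne (σ.injective h).symm
          simp [this]
        have hfi : (if σ i = σ i then (0:ℝ) else e) = 0 := by simp
        have hagree : ∀ k, k ≠ i → k ≠ j →
            B k (σ i) = (if σ k = σ i then (0:ℝ) else e) := by
          intro k hk1 hk2
          have e2 := congrFun (congrFun hEq k) (σ i)
          rw [Td_mul_apply dd lam i j hijne, if_neg hk1, if_neg hk2] at e2
          simp only [Matrix.of_apply] at e2
          exact e2.symm
        have hmemi : i ∈ (Finset.univ : Finset (Fin m)) := Finset.mem_univ i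
        have hmemj : j ∈ Finset.univ.erase i :=
          Finset.mem_erase.mpr ⟨Ne.symm hijne, Finset.mem_univ j⟩
        have eB1 : ∑ k ∈ (Finset.univ.erase i).erase j, B k (σ i) + B j (σ i)
            = ∑ k ∈ Finset.univ.erase i, B k (σ i) := Finset.sum_erase_add _ _ hmemj
        have eB2 : ∑ k ∈ Finset.univ.erase i, B k (σ i) + B i (σ i)
            = ∑ k ∈ Finset.univ, B k (σ i) := Finset.sum_erase_add _ _ hmemi
        have eM1 : ∑ k ∈ (Finset.univ.erase i).erase j, (if σ k = σ i then (0:ℝ) else e)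
              + (if σ j = σ i then (0:ℝ) else e)
            = ∑ k ∈ Finset.univ.erase i, (if σ k = σ i then (0:ℝ) else e) :=
          Finset.sum_erase_add _ _ hmemj
        have eM2 : ∑ k ∈ Finset.univ.erase i, (if σ k = σ i then (0:ℝ) else e)
              + (if σ i = σ i then (0:ℝ) else e)
            = ∑ k ∈ Finset.univ, (if σ k = σ i then (0:ℝ) else e) :=
          Finset.sum_erase_add _ _ hmemi
        have hagree2 : ∑ k ∈ (Finset.univ.erase i).erase j, B k (σ i)
            = ∑ k ∈ (Finset.univ.erase i).erase j, (if σ k = σ i then (0:ℝ) else e) := by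
          refine Finset.sum_congr rfl fun k hk => ?_
          rw [Finset.mem_erase] at hk
          obtain ⟨hk2, hk1⟩ := hk
          rw [Finset.mem_erase] at hk1
          exact hagree k hk1.1 hk2
        rw [hBi] at eB2
        rw [hBj] at eB1
        rw [hfi] at eM2
        rw [hfj] at eM1
        rw [hsum1] at eB2
        rw [hsum2] at eM2
        linarith


/-- for non-increasing strictly positive `d` on `n ≥ 4` points with
`d_n < d_{n-1}`, and `M = M₀ ⊕ 1` with `M₀` the doubly stochastic matrix with
off-diagonal entries `1/(n-2)` and zero diagonal: any decomposition of `M` as a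
product of `T^d`-transforms uses only transforms acting trivially on the last
level (every factor on a pair `(i, n)` has weight `0`); consequently `M` is in the
WETO polytope of `d` iff `M₀` is a product of `T`-transforms for the uniform
distribution on `n - 1` points. -/
theorem stmt13 (n : ℕ) (hn : 4 ≤ n) (d : Fin n → ℝ)
    (hpos : ∀ i, 0 < d i) (hsum : ∑ i, d i = 1)
    (hmono : ∀ i j : Fin n, i ≤ j → d j ≤ d i)
    (hlast : d ⟨n - 1, by omega⟩ < d ⟨n - 2, by omega⟩) :
    let M : Matrix (Fin n) (Fin n) ℝ := Matrix.of fun i j =>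
      if i.val = n - 1 ∧ j.val = n - 1 then 1
      else if i.val = n - 1 ∨ j.val = n - 1 then 0
      else if i = j then 0 else 1 / ((n : ℝ) - 2)
    let M0 : Matrix (Fin (n - 1)) (Fin (n - 1)) ℝ := Matrix.of fun i j =>
      if i = j then 0 else 1 / ((n : ℝ) - 2)
    let u : Fin (n - 1) → ℝ := fun _ => 1 / ((n : ℝ) - 1)
    (∀ L : List (ℝ × Fin n × Fin n),
        (∀ t ∈ L, t.2.1 < t.2.2 ∧ t.1 ∈ Set.Icc (0 : ℝ) 1) →
        M = (L.map fun t => Td d t.1 t.2.1 t.2.2).prod →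
        ∀ t ∈ L, t.2.2.val = n - 1 → t.1 = 0) ∧
    ((∃ L : List (ℝ × Fin n × Fin n),
        (∀ t ∈ L, t.2.1 < t.2.2 ∧ t.1 ∈ Set.Icc (0 : ℝ) 1) ∧
        M = (L.map fun t => Td d t.1 t.2.1 t.2.2).prod) ↔
      (∃ L : List (ℝ × Fin (n - 1) × Fin (n - 1)),
        (∀ t ∈ L, t.2.1 < t.2.2 ∧ t.1 ∈ Set.Icc (0 : ℝ) 1) ∧
        M0 = (L.map fun t => Td u t.1 t.2.1 t.2.2).prod)) := by
  intro M M0 u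
  have hcast : (4:ℝ) ≤ (n:ℝ) := by exact_mod_cast hn
  have hMnone : ∀ L : List (ℝ × Fin n × Fin n),
      (∀ t ∈ L, t.2.1 < t.2.2 ∧ t.1 ∈ Set.Icc (0 : ℝ) 1) →
      M ≠ (L.map fun t => Td d t.1 t.2.1 t.2.2).prod := by
    intro L hL
    exact mblock_master n hn d hpos hmono hlast L hL (Equiv.refl _) rfl
  constructor
  · intro L hL hMeq
    exact absurd hMeq (hMnone L hL)
  · constructor
    · rintro ⟨L, hL, hMeq⟩
      exact absurd hMeq (hMnone L hL)
    · rintro ⟨L, hL, hMeq⟩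
      exfalso
      have hcpos : (0:ℝ) < 1 / ((n:ℝ) - 1) := by
        have : (0:ℝ) < (n:ℝ) - 1 := by linarith
        positivity
      have hcast2 : ((n - 1 : ℕ) : ℝ) = (n:ℝ) - 1 := by
        have h1 : 1 ≤ n := by omega
        push_cast [Nat.cast_sub h1]
        ring
      have he : (((n - 1 : ℕ) : ℝ) - 1) * (1 / ((n:ℝ) - 2)) = 1 := by
        rw [hcast2]
        have : (n:ℝ) - 2 ≠ 0 := by linarith
        field_simp
        ring
      exact unif_master (n - 1) (by omega) (1 / ((n:ℝ) - 1)) hcpos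
        (1 / ((n:ℝ) - 2)) he L hL (Equiv.refl _) hMeq
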